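/- arXiv:1301.3963 — 4 statements merged into one kernel-verified Lean document; each statement's English description precedes it below -/
import Mathlib

section
/- Pisier's inequality for barycentric spaces: Fix m ∈ ℕ, p,K ∈ [1,∞) and a metric space (X,d_X) that is p-barycentric with constant K via the barycenter-type map B : P_X → X. Let Ω be a finite set and μ a probability measure on Ω with μ(ω) > 0 for every ω ∈ Ω. Suppose {Ω,∅} = F_0 ⊆ F_1 ⊆ … ⊆ F_m ⊆ 2^Ω is a filtration of σ-algebras with respect to which Z_0,…,Z_m : Ω → X is an X-valued martingale (i.e., B(Z_i|F_{i−1}) = Z_{i−1} for i = 1,…,m). Then for every z ∈ X: K^p ∫_Ω d_X(Z_0,z)^p dμ + Σ_{t=0}^{m−1} ∫_Ω d_X(Z_{t+1},Z_t)^p dμ ≤ K^p ∫_Ω d_X(Z_m,z)^p dμ. -/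
open scoped BigOperators ENNReal
open scoped Classical

noncomputable section

/-- A finitely supported probability measure on `X`. -/
structure FinProb (X : Type*) where
  w : X →₀ ℝ
  nonneg : ∀ x, 0 ≤ w x
  total : w.sum (fun _ r => r) = 1

namespace FinProb

/-- The Dirac point mass at `x`. -/
def dirac {X : Type*} (x : X) : FinProb X where
  w := Finsupp.single x 1
  nonneg := fun y => by
    rw [Finsupp.single_apply]
    split <;> norm_num
  total := Finsupp.sum_single_index rfl

/-- The probability measure `∑ i, w i • δ_{Z i}` for nonnegative weights summing to 1. -/
def mix {ι X : Type*} [Fintype ι] (w : ι → ℝ) (Z : ι → X)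
    (hw : ∀ i, 0 ≤ w i) (h1 : ∑ i, w i = 1) : FinProb X where
  w := ∑ i, Finsupp.single (Z i) (w i)
  nonneg := fun x => by
    rw [Finset.sum_apply']
    refine Finset.sum_nonneg fun i _ => ?_
    rw [Finsupp.single_apply]
    split
    · exact hw i
    · exact le_rfl
  total := by
    rw [← Finsupp.sum_finset_sum_index (fun _ => rfl) (fun _ _ _ => rfl)]
    have h : ∀ i ∈ (Finset.univ : Finset ι),
        (Finsupp.single (Z i) (w i)).sum (fun _ r => r) = w i :=
      fun i _ => Finsupp.sum_single_index rfl
    rw [Finset.sum_congr rfl h]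
    exact h1

/-- `mix` with normalization of the weights. -/
def mixN {ι X : Type*} [Fintype ι] (w : ι → ℝ) (Z : ι → X)
    (hw : ∀ i, 0 ≤ w i) (hpos : 0 < ∑ i, w i) : FinProb X :=
  mix (fun i => w i / ∑ j, w j) Z
    (fun i => div_nonneg (hw i) hpos.le)
    (by rw [← Finset.sum_div, div_self (ne_of_gt hpos)])

/-- Integral of `f : X → ℝ` against `μ`. -/
def exp {X : Type*} (μ : FinProb X) (f : X → ℝ) : ℝ :=
  μ.w.sum fun x r => r * f x

end FinProb

/-- `π` is a coupling of `μ` and `ν`. -/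
def IsCoupling {X : Type*} (π : FinProb (X × X)) (μ ν : FinProb X) : Prop :=
  (∀ x : X, (π.w.sum fun q r => if q.1 = x then r else 0) = μ.w x) ∧
  (∀ y : X, (π.w.sum fun q r => if q.2 = y then r else 0) = ν.w y)

/-- The Wasserstein `p` distance between finitely supported probability measures. -/
def wassersteinDist {X : Type*} [MetricSpace X] (p : ℝ) (μ ν : FinProb X) : ℝ :=
  sInf {c : ℝ | ∃ π : FinProb (X × X), IsCoupling π μ ν ∧
    c = (π.exp fun q => dist q.1 q.2 ^ p) ^ p⁻¹}

/-- A barycenter map sends Dirac masses to their base points. -/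
def IsBarycenterMap {X : Type*} (bary : FinProb X → X) : Prop :=
  ∀ x : X, bary (FinProb.dirac x) = x

/-- `X` is `W_p` barycentric with constant `Γ` via the barycenter map `bary`. -/
def IsWBarycentric {X : Type*} [MetricSpace X] (p Γ : ℝ) (bary : FinProb X → X) : Prop :=
  IsBarycenterMap bary ∧
    ∀ μ ν : FinProb X, dist (bary μ) (bary ν) ≤ Γ * wassersteinDist p μ ν

/-- `X` is `p`-barycentric with constant `K` via the map `bary`. -/
def IsPBarycentric {X : Type*} [MetricSpace X] (p K : ℝ) (bary : FinProb X → X) : Prop :=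
  ∀ (x : X) (μ : FinProb X),
    dist x (bary μ) ^ p + K ^ (-p) * (μ.exp fun y => dist (bary μ) y ^ p)
      ≤ μ.exp fun y => dist x y ^ p

/-- A (possibly rectangular) matrix is stochastic if it has nonnegative entries and
each row sums to `1`. -/
def IsStochastic {n m : ℕ} (A : Matrix (Fin n) (Fin m) ℝ) : Prop :=
  (∀ i j, 0 ≤ A i j) ∧ ∀ i, ∑ j, A i j = 1

/-- `A` is reversible relative to the probability vector `π`. -/
def IsReversible {n : ℕ} (A : Matrix (Fin n) (Fin n) ℝ) (π : Fin n → ℝ) : Prop :=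
  ∀ i j, π i * A i j = π j * A j i

/-- `π` is a probability vector. -/
def IsProbVec {n : ℕ} (π : Fin n → ℝ) : Prop :=
  (∀ i, 0 ≤ π i) ∧ ∑ i, π i = 1

/-- The Cesàro average `𝒜_t(A) = (1/t) ∑_{s=1}^t A^s`. -/
def cesaro {n : ℕ} (A : Matrix (Fin n) (Fin n) ℝ) (t : ℕ) : Matrix (Fin n) (Fin n) ℝ :=
  (t : ℝ)⁻¹ • ∑ s ∈ Finset.Icc 1 t, A ^ s

/-- `X` has Markov type `p` with constant `M`. -/
def HasMarkovType (X : Type*) [MetricSpace X] (p M : ℝ) : Prop :=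
  ∀ (n t : ℕ), 0 < n → 0 < t → ∀ (π : Fin n → ℝ) (A : Matrix (Fin n) (Fin n) ℝ),
    IsProbVec π → IsStochastic A → IsReversible A π → ∀ x : Fin n → X,
      ∑ i, ∑ j, π i * (A ^ t) i j * dist (x i) (x j) ^ p ≤
        M ^ p * t * ∑ i, ∑ j, π i * A i j * dist (x i) (x j) ^ p

/-- `X` has metric Markov cotype `p` with constant `N`. -/
def HasMetricMarkovCotype (X : Type*) [MetricSpace X] (p N : ℝ) : Prop :=
  ∀ (n t : ℕ), 0 < n → 0 < t → ∀ (π : Fin n → ℝ) (A : Matrix (Fin n) (Fin n) ℝ),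
    IsProbVec π → IsStochastic A → IsReversible A π → ∀ x : Fin n → X,
      ∃ y : Fin n → X,
        (∑ i, π i * dist (x i) (y i) ^ p) +
          t * ∑ i, ∑ j, π i * A i j * dist (y i) (y j) ^ p ≤
        N ^ p * ∑ i, ∑ j, π i * cesaro A t i j * dist (x i) (x j) ^ p

/-- The Markov type `p` constant `M_p(X)`. -/
def markovTypeConst (X : Type*) [MetricSpace X] (p : ℝ) : ℝ :=
  sInf {M : ℝ | 0 < M ∧ HasMarkovType X p M}

/-- The metric Markov cotype `p` constant `N_p(X)`. -/
def markovCotypeConst (X : Type*) [MetricSpace X] (p : ℝ) : ℝ :=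
  sInf {N : ℝ | 0 < N ∧ HasMetricMarkovCotype X p N}

/-- The nonlinear spectral gap quantity `γ₊(A, d_X^p)`. -/
def gammaPlus (X : Type*) [MetricSpace X] {n : ℕ} (A : Matrix (Fin n) (Fin n) ℝ)
    (p : ℝ) : ℝ≥0∞ :=
  sInf {g : ℝ≥0∞ | ∀ x y : Fin n → X,
    ENNReal.ofReal (((n : ℝ) ^ 2)⁻¹ * ∑ i, ∑ j, dist (x i) (y j) ^ p) ≤
      (g / (n : ℝ≥0∞)) * ENNReal.ofReal (∑ i, ∑ j, A i j * dist (x i) (y j) ^ p)}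

/-- The metric of `L_p^n(X)`. -/
def dLpn {X : Type*} [MetricSpace X] (p : ℝ) {n : ℕ} (f g : Fin n → X) : ℝ :=
  ((n : ℝ)⁻¹ * ∑ i, dist (f i) (g i) ^ p) ^ p⁻¹

/-- The barycenter `B(f) = B((1/n) ∑ δ_{f(i)})` of `f : Fin n → X`. -/
def baryFun {X : Type*} [MetricSpace X] (bary : FinProb X → X) {n : ℕ} (hn : 0 < n)
    (f : Fin n → X) : X :=
  bary (FinProb.mixN (fun _ : Fin n => 1) f (fun _ => zero_le_one)
    (by
      simp only [Finset.sum_const, Finset.card_univ, Fintype.card_fin, nsmul_eq_mul, mul_one]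
      exact_mod_cast hn))

/-- The nonlinear action `(A ⊗ I_X^n)(f)(i) = B(∑_j a_{ij} δ_{f(j)})`. -/
def matAct {X : Type*} [MetricSpace X] (bary : FinProb X → X) {n : ℕ}
    (A : Matrix (Fin n) (Fin n) ℝ) (hA : IsStochastic A) (f : Fin n → X) : Fin n → X :=
  fun i => bary (FinProb.mix (fun j => A i j) f (fun j => hA.1 i j) (hA.2 i))

/-- The quantity `λ_p(T)`. -/
def lambdaP {X : Type*} [MetricSpace X] (p : ℝ) {n : ℕ} (hn : 0 < n)
    (bary : FinProb X → X) (T : (Fin n → X) → (Fin n → X)) : ℝ≥0∞ :=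
  sInf {l : ℝ≥0∞ | ∀ f : Fin n → X,
    ENNReal.ofReal (dLpn p (T f) (fun _ => baryFun bary hn (T f))) ≤
      l * ENNReal.ofReal (dLpn p f (fun _ => baryFun bary hn f))}

/-- A finite σ-algebra on a finite set `Ω`, described by its atoms. -/
structure FinPartition (Ω : Type*) [Fintype Ω] where
  atom : Ω → Finset Ω
  mem_atom : ∀ ω, ω ∈ atom ω
  atom_eq : ∀ ω ω', ω' ∈ atom ω → atom ω' = atom ω

/-- The conditional barycenter `B(Z | F)`. -/
def condBary {Ω X : Type*} [Fintype Ω] (bary : FinProb X → X)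
    (μ : Ω → ℝ) (hμ : ∀ ω, 0 < μ ω) (F : FinPartition Ω) (Z : Ω → X) : Ω → X :=
  fun ω => bary (FinProb.mixN (fun a : {a // a ∈ F.atom ω} => μ a) (fun a => Z a)
    (fun a => (hμ a).le)
    (Finset.sum_pos (fun a _ => hμ a) ⟨⟨ω, F.mem_atom ω⟩, Finset.mem_univ _⟩))



lemma FinProb.ext' {X : Type*} {μ ν : FinProb X} (h : μ.w = ν.w) : μ = ν := by
  cases μ; cases ν; simpa using h

lemma FinProb.exp_mix {ι X : Type*} [Fintype ι] (w : ι → ℝ) (Z : ι → X)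
    (hw : ∀ i, 0 ≤ w i) (h1 : ∑ i, w i = 1) (f : X → ℝ) :
    (FinProb.mix w Z hw h1).exp f = ∑ i, w i * f (Z i) := by
  unfold FinProb.exp FinProb.mix
  rw [← Finsupp.sum_finset_sum_index (fun x => zero_mul (f x))
    (fun x r s => add_mul r s (f x))]
  exact Finset.sum_congr rfl fun i _ => Finsupp.sum_single_index (zero_mul _)

lemma FinPartition.mem_symm {Ω : Type*} [Fintype Ω] (F : FinPartition Ω) {a ω : Ω}
    (h : a ∈ F.atom ω) : ω ∈ F.atom a := by
  rw [F.atom_eq ω a h]; exact F.mem_atom ω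

lemma tower_sum {Ω : Type*} [Fintype Ω] (μ : Ω → ℝ) (hμ : ∀ ω, 0 < μ ω)
    (F : FinPartition Ω) (h : Ω → ℝ) :
    ∑ ω, μ ω * ((∑ a ∈ F.atom ω, μ a)⁻¹ * ∑ a ∈ F.atom ω, μ a * h a)
      = ∑ a, μ a * h a := by
  have key : ∀ ω : Ω, μ ω * ((∑ a ∈ F.atom ω, μ a)⁻¹ * ∑ a ∈ F.atom ω, μ a * h a)
      = ∑ a ∈ F.atom ω, μ ω * (∑ b ∈ F.atom ω, μ b)⁻¹ * (μ a * h a) := by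
    intro ω
    rw [Finset.mul_sum, Finset.mul_sum]
    exact Finset.sum_congr rfl fun a _ => by ring
  rw [Finset.sum_congr rfl fun ω _ => key ω]
  rw [Finset.sum_comm' (s' := fun a => F.atom a) (t' := Finset.univ)
    (fun x y => by
      constructor
      · rintro ⟨-, hy⟩; exact ⟨F.mem_symm hy, Finset.mem_univ _⟩
      · rintro ⟨hx, -⟩; exact ⟨Finset.mem_univ _, F.mem_symm hx⟩)]
  refine Finset.sum_congr rfl fun a _ => ?_
  have hc : ∀ ω ∈ F.atom a, μ ω * (∑ b ∈ F.atom ω, μ b)⁻¹ * (μ a * h a)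
      = μ ω * (∑ b ∈ F.atom a, μ b)⁻¹ * (μ a * h a) := by
    intro ω hω
    rw [F.atom_eq a ω hω]
  rw [Finset.sum_congr rfl hc, ← Finset.sum_mul, ← Finset.sum_mul,
    mul_inv_cancel₀ (ne_of_gt (Finset.sum_pos (fun b _ => hμ b) ⟨a, F.mem_atom a⟩)),
    one_mul]

lemma mixN_w_subtype {Ω X : Type*} [Fintype Ω] (μ : Ω → ℝ) (s : Finset Ω) (W : Ω → X)
    (h0 : ∀ a : {a // a ∈ s}, 0 ≤ μ a) (hpos : 0 < ∑ a : {a // a ∈ s}, μ (a : Ω)) :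
    (FinProb.mixN (fun a : {a // a ∈ s} => μ a) (fun a => W a) h0 hpos).w
      = ∑ x ∈ s, Finsupp.single (W x) (μ x / ∑ y ∈ s, μ y) := by
  show (∑ i : {a // a ∈ s},
      Finsupp.single (W i) (μ i / ∑ j : {a // a ∈ s}, μ (j : Ω))) = _
  rw [Finset.sum_coe_sort s μ]
  exact Finset.sum_coe_sort s (fun x => Finsupp.single (W x) (μ x / ∑ y ∈ s, μ y))

lemma condBary_congr {Ω X : Type*} [Fintype Ω] (bary : FinProb X → X)
    (μ : Ω → ℝ) (hμ : ∀ ω, 0 < μ ω) (F : FinPartition Ω) (W : Ω → X)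
    {ω a : Ω} (ha : a ∈ F.atom ω) :
    condBary bary μ hμ F W a = condBary bary μ hμ F W ω := by
  unfold condBary
  congr 1
  apply FinProb.ext'
  rw [mixN_w_subtype, mixN_w_subtype, F.atom_eq ω a ha]

lemma exp_mixN_subtype {Ω X : Type*} [Fintype Ω] (μ : Ω → ℝ) (s : Finset Ω) (W : Ω → X)
    (h0 : ∀ a : {a // a ∈ s}, 0 ≤ μ a) (hpos : 0 < ∑ a : {a // a ∈ s}, μ (a : Ω))
    (f : X → ℝ) :
    (FinProb.mixN (fun a : {a // a ∈ s} => μ a) (fun a => W a) h0 hpos).exp f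
      = (∑ a ∈ s, μ a)⁻¹ * ∑ a ∈ s, μ a * f (W a) := by
  unfold FinProb.mixN
  rw [FinProb.exp_mix]
  have hT : (∑ j : {a // a ∈ s}, μ (j : Ω)) = ∑ y ∈ s, μ y := Finset.sum_coe_sort s μ
  simp_rw [hT]
  rw [Finset.sum_coe_sort s (fun a => μ a / (∑ y ∈ s, μ y) * f (W a)), Finset.mul_sum]
  exact Finset.sum_congr rfl fun a _ => by ring

theorem statement8 (m : ℕ) (p K : ℝ) (hp : 1 ≤ p) (hK : 1 ≤ K)
    (X : Type*) [MetricSpace X] (bary : FinProb X → X)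
    (hBary : IsBarycenterMap bary) (hP : IsPBarycentric p K bary)
    (Ω : Type*) [Fintype Ω] (μ : Ω → ℝ) (hμ : ∀ ω, 0 < μ ω) (hμ1 : ∑ ω, μ ω = 1)
    (F : ℕ → FinPartition Ω)
    (hF0 : ∀ ω, (F 0).atom ω = Finset.univ)
    (hFmono : ∀ i < m, ∀ ω, (F (i + 1)).atom ω ⊆ (F i).atom ω)
    (Z : ℕ → Ω → X)
    (hmart : ∀ i < m, condBary bary μ hμ (F i) (Z (i + 1)) = Z i)
    (z : X) :
    K ^ p * ∑ ω, μ ω * dist (Z 0 ω) z ^ p +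
      ∑ t ∈ Finset.range m, ∑ ω, μ ω * dist (Z (t + 1) ω) (Z t ω) ^ p ≤
    K ^ p * ∑ ω, μ ω * dist (Z m ω) z ^ p := by
  have hK0 : (0:ℝ) < K := lt_of_lt_of_le one_pos hK
  have hKp : (0:ℝ) < K ^ p := Real.rpow_pos_of_pos hK0 p
  have hKinv : K ^ p * K ^ (-p) = 1 := by
    rw [← Real.rpow_add hK0]; simp
  have key : ∀ i < m,
      (∑ ω, μ ω * dist (Z i ω) z ^ p)
        + K ^ (-p) * ∑ ω, μ ω * dist (Z (i+1) ω) (Z i ω) ^ p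
      ≤ ∑ ω, μ ω * dist (Z (i+1) ω) z ^ p := by
    intro i hi
    have hpt : ∀ ω : Ω, dist (Z i ω) z ^ p
        + K ^ (-p) * (((∑ a ∈ (F i).atom ω, μ a)⁻¹ *
            ∑ a ∈ (F i).atom ω, μ a * dist (Z (i+1) a) (Z i a) ^ p))
        ≤ (∑ a ∈ (F i).atom ω, μ a)⁻¹ *
            ∑ a ∈ (F i).atom ω, μ a * dist (Z (i+1) a) z ^ p := by
      intro ω
      have h := hP z (FinProb.mixN (fun a : {a // a ∈ (F i).atom ω} => μ a)
        (fun a => Z (i+1) a) (fun a => (hμ a).le)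
        (Finset.sum_pos (fun a _ => hμ a) ⟨⟨ω, (F i).mem_atom ω⟩, Finset.mem_univ _⟩))
      have hb : bary (FinProb.mixN (fun a : {a // a ∈ (F i).atom ω} => μ a)
          (fun a => Z (i+1) a) (fun a => (hμ a).le)
          (Finset.sum_pos (fun a _ => hμ a) ⟨⟨ω, (F i).mem_atom ω⟩, Finset.mem_univ _⟩))
          = Z i ω := by
        have := congrFun (hmart i hi) ω
        exact this
      rw [exp_mixN_subtype, exp_mixN_subtype, hb] at h
      have hc1 : ∀ a ∈ (F i).atom ω,
          μ a * dist (Z i ω) (Z (i+1) a) ^ p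
            = μ a * dist (Z (i+1) a) (Z i a) ^ p := by
        intro a ha
        have hZa : Z i a = Z i ω := by
          rw [← hmart i hi]; exact condBary_congr bary μ hμ (F i) (Z (i+1)) ha
        rw [hZa, dist_comm]
      rw [Finset.sum_congr rfl hc1] at h
      have hc2 : ∀ a ∈ (F i).atom ω,
          μ a * dist z (Z (i+1) a) ^ p = μ a * dist (Z (i+1) a) z ^ p := by
        intro a _; rw [dist_comm]
      rw [Finset.sum_congr rfl hc2, dist_comm] at h
      exact h
    have hsum := Finset.sum_le_sum (fun ω (_ : ω ∈ Finset.univ) =>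
      mul_le_mul_of_nonneg_left (hpt ω) (hμ ω).le)
    have hL : ∑ ω, μ ω * (dist (Z i ω) z ^ p
        + K ^ (-p) * (((∑ a ∈ (F i).atom ω, μ a)⁻¹ *
            ∑ a ∈ (F i).atom ω, μ a * dist (Z (i+1) a) (Z i a) ^ p)))
        = (∑ ω, μ ω * dist (Z i ω) z ^ p)
          + K ^ (-p) * ∑ ω, μ ω * dist (Z (i+1) ω) (Z i ω) ^ p := by
      rw [← tower_sum μ hμ (F i) (fun a => dist (Z (i+1) a) (Z i a) ^ p)]
      rw [Finset.mul_sum, ← Finset.sum_add_distrib]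
      exact Finset.sum_congr rfl fun ω _ => by ring
    have hR : ∑ ω, μ ω * ((∑ a ∈ (F i).atom ω, μ a)⁻¹ *
            ∑ a ∈ (F i).atom ω, μ a * dist (Z (i+1) a) z ^ p)
        = ∑ ω, μ ω * dist (Z (i+1) ω) z ^ p :=
      tower_sum μ hμ (F i) (fun a => dist (Z (i+1) a) z ^ p)
    rw [hL, hR] at hsum
    exact hsum
  have main : ∀ n, n ≤ m →
      K ^ p * (∑ ω, μ ω * dist (Z 0 ω) z ^ p)
        + ∑ t ∈ Finset.range n, ∑ ω, μ ω * dist (Z (t+1) ω) (Z t ω) ^ p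
      ≤ K ^ p * ∑ ω, μ ω * dist (Z n ω) z ^ p := by
    intro n hn
    induction n with
    | zero => simp
    | succ k ih =>
      have hk := ih (Nat.le_of_succ_le hn)
      have hkm : k < m := hn
      have hstep := mul_le_mul_of_nonneg_left (key k hkm) hKp.le
      have heq : K ^ p * ((∑ ω, μ ω * dist (Z k ω) z ^ p)
          + K ^ (-p) * ∑ ω, μ ω * dist (Z (k+1) ω) (Z k ω) ^ p)
          = K ^ p * (∑ ω, μ ω * dist (Z k ω) z ^ p)
            + ∑ ω, μ ω * dist (Z (k+1) ω) (Z k ω) ^ p := by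
        rw [mul_add, ← mul_assoc, hKinv, one_mul]
      rw [heq] at hstep
      rw [Finset.sum_range_succ]
      linarith
  exact main m le_rfl


end
end

section
/- Fix p ∈ [1,∞) and n,t ∈ ℕ. Suppose A ∈ M_n(ℝ) is a stochastic matrix that is reversible relative to a probability vector π ∈ Δ^{n-1}. Then for every metric space (X,d_X) and every x_1,…,x_n ∈ X: Σ_{i,j} π_i (A^t)_{ij} d_X(x_i,x_j)^p ≤ 2^p Σ_{i,j} π_i 𝒜_t(A)_{ij} d_X(x_i,x_j)^p. -/
open scoped BigOperators ENNReal
open scoped Classical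

noncomputable section

lemma st9_rpow_tri (a b c : ℝ) (ha : 0 ≤ a) (hb : 0 ≤ b) (hc : 0 ≤ c) (h : a ≤ b + c)
    {p : ℝ} (hp : 1 ≤ p) : a ^ p ≤ 2 ^ (p - 1) * (b ^ p + c ^ p) := by
  calc a ^ p ≤ (b + c) ^ p := Real.rpow_le_rpow ha h (zero_le_one.trans hp)
    _ ≤ _ := by
      have := NNReal.rpow_add_le_mul_rpow_add_rpow ⟨b, hb⟩ ⟨c, hc⟩ hp
      exact_mod_cast this

lemma st9_pow_stoch {n : ℕ} {A : Matrix (Fin n) (Fin n) ℝ} (hA : IsStochastic A) (s : ℕ) :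
    IsStochastic (A ^ s) := by
  induction s with
  | zero =>
    constructor
    · intro i j
      simp only [pow_zero, Matrix.one_apply]
      split <;> norm_num
    · intro i; simp [Matrix.one_apply]
  | succ s ih =>
    constructor
    · intro i j
      rw [pow_succ, Matrix.mul_apply]
      exact Finset.sum_nonneg fun k _ => mul_nonneg (ih.1 i k) (hA.1 k j)
    · intro i
      simp only [pow_succ, Matrix.mul_apply]
      rw [Finset.sum_comm]
      simp only [← Finset.sum_mul, ← Finset.mul_sum, hA.2, mul_one]
      exact ih.2 i

lemma st9_stationary {n : ℕ} {A : Matrix (Fin n) (Fin n) ℝ} {π : Fin n → ℝ}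
    (hrev : IsReversible A π) (hA : IsStochastic A) (s : ℕ) (k : Fin n) :
    ∑ i, π i * (A ^ s) i k = π k := by
  induction s generalizing k with
  | zero =>
    simp only [pow_zero, Matrix.one_apply]
    rw [Finset.sum_eq_single k]
    · simp
    · intro b _ h; simp [h]
    · simp
  | succ s ih =>
    simp only [pow_succ, Matrix.mul_apply, Finset.mul_sum]
    simp only [← mul_assoc]
    rw [Finset.sum_comm]
    calc ∑ m, ∑ i, π i * (A ^ s) i m * A m k
        = ∑ m, π m * A m k := by
          refine Finset.sum_congr rfl fun m _ => ?_
          rw [← Finset.sum_mul, ih m]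
      _ = ∑ m, π k * A k m := Finset.sum_congr rfl fun m _ => hrev m k
      _ = π k := by rw [← Finset.mul_sum, hA.2, mul_one]

theorem statement9 (p : ℝ) (hp : 1 ≤ p) (n t : ℕ) (hn : 0 < n) (ht : 0 < t)
    (A : Matrix (Fin n) (Fin n) ℝ) (π : Fin n → ℝ)
    (hA : IsStochastic A) (hπ : IsProbVec π) (hrev : IsReversible A π)
    (X : Type*) [MetricSpace X] (x : Fin n → X) :
    ∑ i, ∑ j, π i * (A ^ t) i j * dist (x i) (x j) ^ p ≤
      (2 : ℝ) ^ p * ∑ i, ∑ j, π i * cesaro A t i j * dist (x i) (x j) ^ p := by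
  set E : ℕ → ℝ := fun s => ∑ i, ∑ j, π i * (A ^ s) i j * dist (x i) (x j) ^ p with hE
  have hEnn : ∀ s, 0 ≤ E s := by
    intro s
    refine Finset.sum_nonneg fun i _ => Finset.sum_nonneg fun j _ => ?_
    exact mul_nonneg (mul_nonneg (hπ.1 i) ((st9_pow_stoch hA s).1 i j))
      (Real.rpow_nonneg dist_nonneg _)
  have hE0 : E 0 = 0 := by
    simp only [hE, pow_zero, Matrix.one_apply]
    refine Finset.sum_eq_zero fun i _ => Finset.sum_eq_zero fun j _ => ?_
    by_cases h : i = j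
    · subst h
      simp [Real.zero_rpow (by linarith : p ≠ 0)]
    · simp [h]
  -- key inequality : E t ≤ 2^(p-1) * (E s + E (t - s))
  have key : ∀ s, s ≤ t → E t ≤ 2 ^ (p - 1) * (E s + E (t - s)) := by
    intro s hst
    have hsplit : A ^ t = A ^ s * A ^ (t - s) := by
      rw [← pow_add, Nat.add_sub_cancel' hst]
    have h1 : E t = ∑ i, ∑ k, ∑ j,
        π i * (A ^ s) i k * (A ^ (t - s)) k j * dist (x i) (x j) ^ p := by
      simp only [hE, hsplit, Matrix.mul_apply, Finset.mul_sum, Finset.sum_mul]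
      refine Finset.sum_congr rfl fun i _ => ?_
      rw [Finset.sum_comm]
      refine Finset.sum_congr rfl fun k _ => Finset.sum_congr rfl fun j _ => ?_
      ring
    have h2 : E t ≤ ∑ i, ∑ k, ∑ j,
        π i * (A ^ s) i k * (A ^ (t - s)) k j *
          (2 ^ (p - 1) * (dist (x i) (x k) ^ p + dist (x k) (x j) ^ p)) := by
      rw [h1]
      refine Finset.sum_le_sum fun i _ => Finset.sum_le_sum fun k _ =>
        Finset.sum_le_sum fun j _ => ?_
      refine mul_le_mul_of_nonneg_left ?_ ?_
      · exact st9_rpow_tri _ _ _ dist_nonneg dist_nonneg dist_nonneg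
          (dist_triangle (x i) (x k) (x j)) hp
      · exact mul_nonneg (mul_nonneg (hπ.1 i) ((st9_pow_stoch hA s).1 i k))
          ((st9_pow_stoch hA (t - s)).1 k j)
    have h3 : ∑ i, ∑ k, ∑ j,
        π i * (A ^ s) i k * (A ^ (t - s)) k j *
          (2 ^ (p - 1) * (dist (x i) (x k) ^ p + dist (x k) (x j) ^ p))
        = 2 ^ (p - 1) * (E s + E (t - s)) := by
      have hT : ∀ i k j, π i * (A ^ s) i k * (A ^ (t - s)) k j *
            (2 ^ (p - 1) * (dist (x i) (x k) ^ p + dist (x k) (x j) ^ p))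
          = 2 ^ (p - 1) * (π i * (A ^ s) i k * (A ^ (t - s)) k j * dist (x i) (x k) ^ p)
            + 2 ^ (p - 1) * (π i * (A ^ s) i k * (A ^ (t - s)) k j * dist (x k) (x j) ^ p) :=
        fun i k j => by ring
      simp only [hT, Finset.sum_add_distrib, ← Finset.mul_sum]
      rw [mul_add]
      congr 1
      · congr 1
        simp only [hE]
        refine Finset.sum_congr rfl fun i _ => Finset.sum_congr rfl fun k _ => ?_
        have : ∀ j, π i * (A ^ s) i k * (A ^ (t - s)) k j * dist (x i) (x k) ^ p
            = π i * (A ^ s) i k * dist (x i) (x k) ^ p * (A ^ (t - s)) k j :=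
          fun j => by ring
        simp only [this, ← Finset.mul_sum, (st9_pow_stoch hA (t - s)).2 k, mul_one]
      · congr 1
        simp only [hE]
        calc ∑ i, ∑ k, ∑ j, π i * (A ^ s) i k * (A ^ (t - s)) k j * dist (x k) (x j) ^ p
            = ∑ k, ∑ j, (∑ i, π i * (A ^ s) i k) * ((A ^ (t - s)) k j * dist (x k) (x j) ^ p) := by
              rw [Finset.sum_comm]
              refine Finset.sum_congr rfl fun k _ => ?_
              rw [Finset.sum_comm]
              simp only [Finset.sum_mul]
              refine Finset.sum_congr rfl fun j _ => Finset.sum_congr rfl fun i _ => by ring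
          _ = ∑ k, ∑ j, π k * (A ^ (t - s)) k j * dist (x k) (x j) ^ p := by
              refine Finset.sum_congr rfl fun k _ => Finset.sum_congr rfl fun j _ => ?_
              rw [st9_stationary hrev hA s k, mul_assoc]
    rw [h3] at h2
    exact h2
  -- sum over s ∈ Icc 1 t
  set S : ℝ := ∑ s ∈ Finset.Icc 1 t, E s with hS
  have hrev_sum : ∑ s ∈ Finset.Icc 1 t, E (t - s) ≤ S := by
    have hbij : ∑ s ∈ Finset.Icc 1 t, E (t - s) = ∑ s ∈ Finset.range t, E s := by
      refine Finset.sum_nbij' (fun s => t - s) (fun s => t - s) ?_ ?_ ?_ ?_ ?_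
      · intro a ha
        simp only [Finset.mem_Icc] at ha
        simp only [Finset.mem_range]
        omega
      · intro a ha
        simp only [Finset.mem_range] at ha
        simp only [Finset.mem_Icc]
        omega
      · intro a ha
        simp only [Finset.mem_Icc] at ha
        show t - (t - a) = a
        omega
      · intro a ha
        simp only [Finset.mem_range] at ha
        show t - (t - a) = a
        omega
      · intro a _
        rfl
    rw [hbij]
    have h01 : ∑ s ∈ Finset.range t, E s = E 0 + ∑ s ∈ Finset.Ico 1 t, E s := by
      rw [Finset.range_eq_Ico, Finset.sum_eq_sum_Ico_succ_bot ht]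
    rw [h01, hE0, zero_add, hS]
    refine Finset.sum_le_sum_of_subset_of_nonneg ?_ fun s _ _ => hEnn s
    intro a ha
    simp only [Finset.mem_Ico] at ha
    simp only [Finset.mem_Icc]
    omega
  have hsum : (t : ℝ) * E t ≤ 2 ^ p * S := by
    have : (t : ℝ) * E t ≤ ∑ s ∈ Finset.Icc 1 t, 2 ^ (p - 1) * (E s + E (t - s)) := by
      have hcard : (Finset.Icc 1 t).card = t := by
        rw [Nat.card_Icc]; omega
      calc (t : ℝ) * E t = ∑ _s ∈ Finset.Icc 1 t, E t := by
            rw [Finset.sum_const, hcard, nsmul_eq_mul]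
        _ ≤ _ := Finset.sum_le_sum fun s hs => key s (Finset.mem_Icc.mp hs).2
    refine this.trans ?_
    have h2p : (2 : ℝ) ^ (p - 1) * 2 = 2 ^ p := by
      rw [show p = p - 1 + 1 by ring, Real.rpow_add two_pos, Real.rpow_one]
      ring_nf
    calc ∑ s ∈ Finset.Icc 1 t, 2 ^ (p - 1) * (E s + E (t - s))
        = 2 ^ (p - 1) * (S + ∑ s ∈ Finset.Icc 1 t, E (t - s)) := by
          rw [← Finset.mul_sum, Finset.sum_add_distrib]
      _ ≤ 2 ^ (p - 1) * (S + S) := by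
          refine mul_le_mul_of_nonneg_left (by linarith) ?_
          positivity
      _ = 2 ^ p * S := by rw [← h2p]; ring
  -- conclude
  have hrhs : ∑ i, ∑ j, π i * cesaro A t i j * dist (x i) (x j) ^ p = (t : ℝ)⁻¹ * S := by
    simp only [cesaro, Matrix.smul_apply, Matrix.sum_apply, smul_eq_mul, hS, hE]
    simp only [Finset.mul_sum, Finset.sum_mul]
    conv_rhs => rw [Finset.sum_comm]
    refine Finset.sum_congr rfl fun i _ => ?_
    rw [Finset.sum_comm]
    refine Finset.sum_congr rfl fun s _ => Finset.sum_congr rfl fun j _ => by ring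
  rw [hrhs]
  have htpos : (0 : ℝ) < t := Nat.cast_pos.mpr ht
  show E t ≤ 2 ^ p * ((t : ℝ)⁻¹ * S)
  calc E t = (t : ℝ)⁻¹ * ((t : ℝ) * E t) := by
        rw [← mul_assoc, inv_mul_cancel₀ (ne_of_gt htpos), one_mul]
    _ ≤ (t : ℝ)⁻¹ * (2 ^ p * S) :=
        mul_le_mul_of_nonneg_left hsum (inv_pos.mpr htpos).le
    _ = 2 ^ p * ((t : ℝ)⁻¹ * S) := by ring


end
end

section
/- Fix p, K ∈ [1,∞) and n ∈ ℕ. Suppose (X,d_X) is a p-barycentric metric space with constant K via a barycenter map B. Then every symmetric stochastic matrix A = (a_{ij}) ∈ M_n(ℝ) with γ₊(A,d_X^p) < ∞ satisfies λ_p(A⊗I_X^n) ≤ β_p(K)·((K^{2p}γ₊(A,d_X^p) − 1)/(K^{2p}γ₊(A,d_X^p) + K^p))^{1/p}. -/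
open scoped BigOperators ENNReal
open scoped Classical

noncomputable section

namespace Aux

lemma exp_mix {ι X : Type*} [Fintype ι] (w : ι → ℝ) (Z : ι → X)
    (hw : ∀ i, 0 ≤ w i) (h1 : ∑ i, w i = 1) (h : X → ℝ) :
    (FinProb.mix w Z hw h1).exp h = ∑ i, w i * h (Z i) := by
  show (∑ i, Finsupp.single (Z i) (w i)).sum (fun x r => r * h x) = _
  rw [← Finsupp.sum_finset_sum_index (h := fun x r => r * h x)
    (fun a => zero_mul (h a)) (fun a b₁ b₂ => add_mul b₁ b₂ (h a))]
  exact Finset.sum_congr rfl fun i _ => Finsupp.sum_single_index (zero_mul _)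

lemma exp_unif {X : Type*} {n : ℕ} (hn : 0 < n) (f : Fin n → X)
    (hw : ∀ _i : Fin n, (0:ℝ) ≤ 1) (hpos : 0 < ∑ _i : Fin n, (1:ℝ)) (h : X → ℝ) :
    (FinProb.mixN (fun _ : Fin n => (1:ℝ)) f hw hpos).exp h = (n:ℝ)⁻¹ * ∑ i, h (f i) := by
  rw [FinProb.mixN, exp_mix]
  simp [Finset.mul_sum, one_div]

lemma mink {n : ℕ} (hn : 0 < n) {p : ℝ} (hp : 1 ≤ p) (x : Fin n → ℝ)
    (hx : ∀ i, 0 ≤ x i) {t : ℝ} (ht : 0 ≤ t) :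
    ((n:ℝ)⁻¹ * ∑ i, (x i + t) ^ p) ^ p⁻¹ ≤ ((n:ℝ)⁻¹ * ∑ i, x i ^ p) ^ p⁻¹ + t := by
  have hp0 : 0 < p := lt_of_lt_of_le one_pos hp
  have hnn : (0:ℝ) < (n:ℝ) := by exact_mod_cast hn
  have hsum1 : 0 ≤ ∑ i, (x i + t) ^ p :=
    Finset.sum_nonneg fun i _ => Real.rpow_nonneg (add_nonneg (hx i) ht) p
  have hsum2 : 0 ≤ ∑ i, x i ^ p :=
    Finset.sum_nonneg fun i _ => Real.rpow_nonneg (hx i) p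
  have key2 : (∑ i, (x i + t) ^ p) ^ p⁻¹ ≤ (∑ i, x i ^ p) ^ p⁻¹ + ((n:ℝ) * t ^ p) ^ p⁻¹ := by
    have key : (∑ i, |x i + t| ^ p) ^ (1/p) ≤
        (∑ i, |x i| ^ p) ^ (1/p) + (∑ _i : Fin n, |t| ^ p) ^ (1/p) :=
      Real.Lp_add_le Finset.univ x (fun _ => t) hp
    have e1 : ∀ i : Fin n, |x i + t| = x i + t := fun i => abs_of_nonneg (add_nonneg (hx i) ht)
    have e2 : ∀ i : Fin n, |x i| = x i := fun i => abs_of_nonneg (hx i)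
    simp only [e1, e2, abs_of_nonneg ht, Finset.sum_const, Finset.card_univ,
      Fintype.card_fin, nsmul_eq_mul, one_div] at key
    exact key
  calc ((n:ℝ)⁻¹ * ∑ i, (x i + t) ^ p) ^ p⁻¹
      = ((n:ℝ)⁻¹) ^ p⁻¹ * (∑ i, (x i + t) ^ p) ^ p⁻¹ := Real.mul_rpow (by positivity) hsum1
    _ ≤ ((n:ℝ)⁻¹) ^ p⁻¹ * ((∑ i, x i ^ p) ^ p⁻¹ + ((n:ℝ) * t ^ p) ^ p⁻¹) :=
        mul_le_mul_of_nonneg_left key2 (by positivity)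
    _ = ((n:ℝ)⁻¹ * ∑ i, x i ^ p) ^ p⁻¹ + ((n:ℝ)⁻¹ * ((n:ℝ) * t ^ p)) ^ p⁻¹ := by
        rw [mul_add, ← Real.mul_rpow (by positivity) hsum2,
          ← Real.mul_rpow (by positivity) (by positivity)]
    _ = ((n:ℝ)⁻¹ * ∑ i, x i ^ p) ^ p⁻¹ + t := by
        rw [inv_mul_cancel_left₀ (ne_of_gt hnn), Real.rpow_rpow_inv ht (ne_of_gt hp0)]

lemma beta_bound {p K β E' Eg t : ℝ} (hp : 1 ≤ p) (hK : 1 ≤ K) (hβ : 1 ≤ β)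
    (hβeq : β ^ p + K ^ p * (β - 1) ^ p = K ^ p)
    (hE' : 0 ≤ E') (hEg : 0 ≤ Eg) (ht : 0 ≤ t)
    (h1 : E' ^ p⁻¹ ≤ Eg ^ p⁻¹ + t) (h2 : t ^ p + (K ^ p)⁻¹ * E' ≤ Eg) :
    E' ≤ β ^ p * Eg := by
  have hp0 : 0 < p := lt_of_lt_of_le one_pos hp
  have hK0 : (0:ℝ) < K := lt_of_lt_of_le one_pos hK
  have hk0 : 0 < K ^ p := Real.rpow_pos_of_pos hK0 p
  by_contra hcon
  push_neg at hcon
  have hβm : (β - 1) ^ p = 1 - (K ^ p)⁻¹ * β ^ p := by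
    have h := hβeq
    field_simp
    linarith
  have htp : t ^ p ≤ Eg * (β - 1) ^ p := by
    rw [hβm]
    have hmul : (K ^ p)⁻¹ * (β ^ p * Eg) ≤ (K ^ p)⁻¹ * E' :=
      mul_le_mul_of_nonneg_left hcon.le (by positivity)
    nlinarith [h2]
  have ht2 : t ≤ (β - 1) * Eg ^ p⁻¹ := by
    have h3 : (t ^ p) ^ p⁻¹ ≤ (Eg * (β - 1) ^ p) ^ p⁻¹ :=
      Real.rpow_le_rpow (Real.rpow_nonneg ht p) htp (by positivity)
    rw [Real.rpow_rpow_inv ht hp0.ne'] at h3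
    rw [Real.mul_rpow hEg (Real.rpow_nonneg (by linarith) p),
      Real.rpow_rpow_inv (by linarith : (0:ℝ) ≤ β - 1) hp0.ne'] at h3
    nlinarith [h3]
  have h4 : E' ^ p⁻¹ ≤ β * Eg ^ p⁻¹ := by
    have := h1.trans (by linarith : Eg ^ p⁻¹ + t ≤ Eg ^ p⁻¹ + (β - 1) * Eg ^ p⁻¹)
    nlinarith [this]
  have h5 : E' ≤ β ^ p * Eg := by
    have h6 := Real.rpow_le_rpow (Real.rpow_nonneg hE' p⁻¹) h4 hp0.le
    rw [Real.rpow_inv_rpow hE' hp0.ne'] at h6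
    rw [Real.mul_rpow (by linarith : (0:ℝ) ≤ β) (Real.rpow_nonneg hEg p⁻¹),
      Real.rpow_inv_rpow hEg hp0.ne'] at h6
    exact h6
  exact absurd h5 (not_le.mpr hcon)

lemma gamma_mem {X : Type*} [MetricSpace X] {n : ℕ} (hn : 0 < n)
    (A : Matrix (Fin n) (Fin n) ℝ) (p : ℝ) (hγ : gammaPlus X A p ≠ ⊤)
    (x y : Fin n → X) :
    ENNReal.ofReal (((n : ℝ) ^ 2)⁻¹ * ∑ i, ∑ j, dist (x i) (y j) ^ p) ≤
      (gammaPlus X A p / (n : ℝ≥0∞)) * ENNReal.ofReal (∑ i, ∑ j, A i j * dist (x i) (y j) ^ p) := by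
  set S : Set ℝ≥0∞ := {g : ℝ≥0∞ | ∀ x y : Fin n → X,
    ENNReal.ofReal (((n : ℝ) ^ 2)⁻¹ * ∑ i, ∑ j, dist (x i) (y j) ^ p) ≤
      (g / (n : ℝ≥0∞)) * ENNReal.ofReal (∑ i, ∑ j, A i j * dist (x i) (y j) ^ p)} with hS
  have hgP : gammaPlus X A p = sInf S := rfl
  have hne : S.Nonempty := by
    by_contra h
    rw [Set.not_nonempty_iff_eq_empty] at h
    apply hγ
    rw [hgP, h, sInf_empty]
  by_cases hc : ENNReal.ofReal (∑ i, ∑ j, A i j * dist (x i) (y j) ^ p) = 0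
  · obtain ⟨g, hg⟩ := hne
    have h := hg x y
    rw [hc, mul_zero] at h
    rw [hc, mul_zero]
    exact h
  · have hn0 : ((n:ℕ) : ℝ≥0∞) ≠ 0 := by
      simp [hn.ne']
    have hb0 : ENNReal.ofReal (∑ i, ∑ j, A i j * dist (x i) (y j) ^ p) / (n : ℝ≥0∞) ≠ 0 := by
      simp [ENNReal.div_eq_zero_iff, hc]
    have hbt : ENNReal.ofReal (∑ i, ∑ j, A i j * dist (x i) (y j) ^ p) / (n : ℝ≥0∞) ≠ ⊤ := by
      exact (ENNReal.div_lt_top ENNReal.ofReal_ne_top hn0).ne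
    have key : ∀ g ∈ S, ENNReal.ofReal (((n : ℝ) ^ 2)⁻¹ * ∑ i, ∑ j, dist (x i) (y j) ^ p) /
        (ENNReal.ofReal (∑ i, ∑ j, A i j * dist (x i) (y j) ^ p) / (n : ℝ≥0∞)) ≤ g := by
      intro g hg
      rw [ENNReal.div_le_iff_le_mul (Or.inl hb0) (Or.inl hbt)]
      calc ENNReal.ofReal (((n : ℝ) ^ 2)⁻¹ * ∑ i, ∑ j, dist (x i) (y j) ^ p)
          ≤ (g / (n : ℝ≥0∞)) * ENNReal.ofReal (∑ i, ∑ j, A i j * dist (x i) (y j) ^ p) := hg x y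
        _ = g * (ENNReal.ofReal (∑ i, ∑ j, A i j * dist (x i) (y j) ^ p) / (n : ℝ≥0∞)) := by
            rw [div_eq_mul_inv, div_eq_mul_inv]; ring
    have h2 : ENNReal.ofReal (((n : ℝ) ^ 2)⁻¹ * ∑ i, ∑ j, dist (x i) (y j) ^ p) /
        (ENNReal.ofReal (∑ i, ∑ j, A i j * dist (x i) (y j) ^ p) / (n : ℝ≥0∞)) ≤ sInf S :=
      le_sInf key
    rw [ENNReal.div_le_iff_le_mul (Or.inl hb0) (Or.inl hbt)] at h2
    rw [hgP]
    calc ENNReal.ofReal (((n : ℝ) ^ 2)⁻¹ * ∑ i, ∑ j, dist (x i) (y j) ^ p)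
        ≤ sInf S * (ENNReal.ofReal (∑ i, ∑ j, A i j * dist (x i) (y j) ^ p) / (n : ℝ≥0∞)) := h2
      _ = sInf S / (n : ℝ≥0∞) * ENNReal.ofReal (∑ i, ∑ j, A i j * dist (x i) (y j) ^ p) := by
          rw [div_eq_mul_inv, div_eq_mul_inv]; ring

lemma spectral_arith {k g ef eg s : ℝ} (hk : 1 ≤ k) (hg : 1 ≤ g)
    (hef : 0 ≤ ef) (heg : 0 ≤ eg) (hs : 0 ≤ s)
    (hI : eg + k⁻¹ * ef ≤ g * s) (hII : eg + k⁻¹ * s ≤ ef)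
    (hden : 0 < k * k * g + k) :
    eg ≤ (k * k * g - 1) / (k * k * g + k) * ef := by
  have hk0 : (0:ℝ) < k := by linarith
  have e1 : k * (k⁻¹ * s) = s := by field_simp
  have e2 : k * (k⁻¹ * ef) = ef := by field_simp
  have hc1 : k * eg + s ≤ k * ef := by
    have h := mul_le_mul_of_nonneg_left hII hk0.le
    linarith [h, e1]
  have hc2 : k * eg + ef ≤ k * (g * s) := by
    have h := mul_le_mul_of_nonneg_left hI hk0.le
    linarith [h, e2]
  have hg0 : (0:ℝ) ≤ k * g := by nlinarith
  have hmain : eg * (k * k * g + k) ≤ ef * (k * k * g - 1) := by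
    nlinarith [hc1, hc2, mul_le_mul_of_nonneg_left hc1 hg0]
  rw [div_mul_eq_mul_div, le_div_iff₀ hden]
  nlinarith [hmain]

end Aux

theorem statement11 (p K : ℝ) (hp : 1 ≤ p) (hK : 1 ≤ K) (n : ℕ) (hn : 0 < n)
    (X : Type*) [MetricSpace X] (bary : FinProb X → X)
    (hBary : IsBarycenterMap bary) (hP : IsPBarycentric p K bary)
    (A : Matrix (Fin n) (Fin n) ℝ) (hA : IsStochastic A) (hsymm : A.IsSymm)
    (hγ : gammaPlus X A p ≠ ⊤)
    (β : ℝ) (hβ : 1 ≤ β) (hβeq : β ^ p + K ^ p * (β - 1) ^ p = K ^ p) :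
    lambdaP p hn bary (matAct bary A hA) ≤
      ENNReal.ofReal (β * ((K ^ (2 * p) * (gammaPlus X A p).toReal - 1) /
        (K ^ (2 * p) * (gammaPlus X A p).toReal + K ^ p)) ^ p⁻¹) := by
  have hp0 : 0 < p := lt_of_lt_of_le one_pos hp
  have hK0 : (0:ℝ) < K := lt_of_lt_of_le one_pos hK
  have hβ0 : (0:ℝ) ≤ β := by linarith
  have hnR : (0:ℝ) < (n:ℝ) := by exact_mod_cast hn
  have hdnn : ∀ a b : X, (0:ℝ) ≤ dist a b ^ p := fun a b => Real.rpow_nonneg dist_nonneg p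
  by_cases htriv : ∀ a b : X, dist a b = 0
  · apply sInf_le
    intro f
    have h0 : dLpn p (matAct bary A hA f) (fun _ => baryFun bary hn (matAct bary A hA f)) = 0 := by
      simp [dLpn, htriv _ _, Real.zero_rpow hp0.ne', Real.zero_rpow (inv_ne_zero hp0.ne')]
    rw [h0]
    simp
  · push_neg at htriv
    obtain ⟨x0, y0, hd0⟩ := htriv
    have hd0' : 0 < dist x0 y0 := lt_of_le_of_ne dist_nonneg (Ne.symm hd0)
    have hn0E : ((n:ℕ) : ℝ≥0∞) ≠ 0 := by simp [hn.ne']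
    -- γ ≥ 1
    have hγ1 : (1:ℝ≥0∞) ≤ gammaPlus X A p := by
      apply le_sInf
      intro g hg
      have h := hg (fun _ => x0) (fun _ => y0)
      have e2 : ∀ i : Fin n, ∑ j, A i j * dist x0 y0 ^ p = dist x0 y0 ^ p := by
        intro i; rw [← Finset.sum_mul, hA.2 i, one_mul]
      simp only [e2, Finset.sum_const, Finset.card_univ, Fintype.card_fin, nsmul_eq_mul] at h
      rw [show ((n:ℝ) ^ 2)⁻¹ * ((n:ℝ) * ((n:ℝ) * dist x0 y0 ^ p)) = dist x0 y0 ^ p from by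
        field_simp] at h
      rw [ENNReal.ofReal_mul hnR.le, ENNReal.ofReal_natCast, ← mul_assoc,
        ENNReal.div_mul_cancel hn0E (ENNReal.natCast_ne_top n)] at h
      have hcne : ENNReal.ofReal (dist x0 y0 ^ p) ≠ 0 := by
        simp [ENNReal.ofReal_eq_zero, not_le, Real.rpow_pos_of_pos hd0' p]
      refine (ENNReal.mul_le_mul_iff_left hcne ENNReal.ofReal_ne_top).mp ?_
      rw [one_mul]
      exact h
    have hγr1 : 1 ≤ (gammaPlus X A p).toReal := by
      have h := ENNReal.toReal_mono hγ hγ1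
      simpa using h
    set γr := (gammaPlus X A p).toReal with hγrdef
    rw [show K ^ (2 * p) = K ^ p * K ^ p from by rw [two_mul, Real.rpow_add hK0]]
    have hk1 : 1 ≤ K ^ p := Real.one_le_rpow hK hp0.le
    have hk0 : (0:ℝ) < K ^ p := by linarith
    have hγr0 : (0:ℝ) ≤ γr := by linarith
    have hRnum : 0 ≤ K ^ p * K ^ p * γr - 1 := by nlinarith
    have hRden : 0 < K ^ p * K ^ p * γr + K ^ p := by nlinarith
    have hR0 : 0 ≤ (K ^ p * K ^ p * γr - 1) / (K ^ p * K ^ p * γr + K ^ p) :=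
      div_nonneg hRnum hRden.le
    apply sInf_le
    intro f
    rw [← ENNReal.ofReal_mul (mul_nonneg hβ0 (Real.rpow_nonneg hR0 p⁻¹))]
    apply ENNReal.ofReal_le_ofReal
    simp only [dLpn]
    -- pointwise barycentric facts
    have hpos1 : 0 < ∑ _i : Fin n, (1:ℝ) := by simpa using hnR
    have hF2j : ∀ j : Fin n,
        dist (matAct bary A hA f j) (baryFun bary hn f) ^ p +
          (K ^ p)⁻¹ * ((n:ℝ)⁻¹ * ∑ i, dist (baryFun bary hn f) (f i) ^ p) ≤
        (n:ℝ)⁻¹ * ∑ i, dist (matAct bary A hA f j) (f i) ^ p := by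
      intro j
      have h := hP (matAct bary A hA f j)
        (FinProb.mixN (fun _ : Fin n => (1:ℝ)) f (fun _ => zero_le_one) hpos1)
      rw [Aux.exp_unif hn, Aux.exp_unif hn, Real.rpow_neg hK0.le] at h
      exact h
    have hF3i : ∀ i : Fin n,
        dist (baryFun bary hn f) (matAct bary A hA f i) ^ p +
          (K ^ p)⁻¹ * ∑ j, A i j * dist (matAct bary A hA f i) (f j) ^ p ≤
        ∑ j, A i j * dist (baryFun bary hn f) (f j) ^ p := by
      intro i
      have h := hP (baryFun bary hn f)
        (FinProb.mix (fun j => A i j) f (fun j => hA.1 i j) (hA.2 i))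
      rw [Aux.exp_mix, Aux.exp_mix, Real.rpow_neg hK0.le] at h
      exact h
    have hF4 : dist (baryFun bary hn f) (baryFun bary hn (matAct bary A hA f)) ^ p +
          (K ^ p)⁻¹ * ((n:ℝ)⁻¹ *
            ∑ j, dist (baryFun bary hn (matAct bary A hA f)) (matAct bary A hA f j) ^ p) ≤
        (n:ℝ)⁻¹ * ∑ j, dist (baryFun bary hn f) (matAct bary A hA f j) ^ p := by
      have h := hP (baryFun bary hn f)
        (FinProb.mixN (fun _ : Fin n => (1:ℝ)) (matAct bary A hA f) (fun _ => zero_le_one) hpos1)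
      rw [Aux.exp_unif hn, Aux.exp_unif hn, Real.rpow_neg hK0.le] at h
      exact h
    -- gamma inequality, real form
    have hγmem := Aux.gamma_mem hn A p hγ f (matAct bary A hA f)
    have hrne : gammaPlus X A p / (n:ℝ≥0∞) *
        ENNReal.ofReal (∑ i, ∑ j, A i j * dist (f i) (matAct bary A hA f j) ^ p) ≠ ⊤ :=
      ENNReal.mul_ne_top (ENNReal.div_lt_top hγ hn0E).ne ENNReal.ofReal_ne_top
    have hγf := ENNReal.toReal_mono hrne hγmem
    rw [ENNReal.toReal_ofReal (mul_nonneg (inv_nonneg.mpr (sq_nonneg _))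
      (Finset.sum_nonneg fun i _ => Finset.sum_nonneg fun j _ => hdnn _ _))] at hγf
    rw [ENNReal.toReal_mul, ENNReal.toReal_div, ENNReal.toReal_natCast,
      ENNReal.toReal_ofReal (Finset.sum_nonneg fun i _ => Finset.sum_nonneg fun j _ =>
        mul_nonneg (hA.1 i j) (hdnn _ _)), ← hγrdef] at hγf
    -- abbreviations
    set G := matAct bary A hA f with hG
    set W := baryFun bary hn f with hW
    set B := baryFun bary hn G with hB
    have hef0 : 0 ≤ ∑ i, dist (f i) W ^ p := Finset.sum_nonneg fun i _ => hdnn _ _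
    have heg0 : 0 ≤ ∑ j, dist (G j) W ^ p := Finset.sum_nonneg fun j _ => hdnn _ _
    have heb0 : 0 ≤ ∑ j, dist (G j) B ^ p := Finset.sum_nonneg fun j _ => hdnn _ _
    have hs0 : 0 ≤ ∑ i, ∑ j, A i j * dist (f i) (G j) ^ p :=
      Finset.sum_nonneg fun i _ => Finset.sum_nonneg fun j _ => mul_nonneg (hA.1 i j) (hdnn _ _)
    have htt0 : 0 ≤ ∑ i, ∑ j, dist (f i) (G j) ^ p :=
      Finset.sum_nonneg fun i _ => Finset.sum_nonneg fun j _ => hdnn _ _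
    -- F2 summed
    have hF2 : (∑ j, dist (G j) W ^ p) + (K ^ p)⁻¹ * ∑ i, dist (f i) W ^ p ≤
        (n:ℝ)⁻¹ * ∑ i, ∑ j, dist (f i) (G j) ^ p := by
      have hsum := Finset.sum_le_sum (fun j (_ : j ∈ Finset.univ) => hF2j j)
      rw [Finset.sum_add_distrib, Finset.sum_const, Finset.card_univ, Fintype.card_fin,
        nsmul_eq_mul, ← Finset.mul_sum] at hsum
      have eR : ∑ j, ∑ i, dist (G j) (f i) ^ p = ∑ i, ∑ j, dist (f i) (G j) ^ p := by
        rw [Finset.sum_comm]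
        exact Finset.sum_congr rfl fun i _ => Finset.sum_congr rfl fun j _ => by rw [dist_comm]
      rw [eR] at hsum
      have eqwf : ∑ i, dist W (f i) ^ p = ∑ i, dist (f i) W ^ p :=
        Finset.sum_congr rfl fun i _ => by rw [dist_comm]
      have eM : (n:ℝ) * ((K ^ p)⁻¹ * ((n:ℝ)⁻¹ * ∑ i, dist W (f i) ^ p)) =
          (K ^ p)⁻¹ * ∑ i, dist (f i) W ^ p := by
        rw [eqwf]; field_simp; try ring
      linarith [hsum, eM]
    -- F1 : gamma
    have hF1 : (n:ℝ)⁻¹ * ∑ i, ∑ j, dist (f i) (G j) ^ p ≤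
        γr * ∑ i, ∑ j, A i j * dist (f i) (G j) ^ p := by
      have h' : (n:ℝ)⁻¹ * ((n:ℝ)⁻¹ * ∑ i, ∑ j, dist (f i) (G j) ^ p) ≤
          (n:ℝ)⁻¹ * (γr * ∑ i, ∑ j, A i j * dist (f i) (G j) ^ p) := by
        calc (n:ℝ)⁻¹ * ((n:ℝ)⁻¹ * ∑ i, ∑ j, dist (f i) (G j) ^ p)
            = ((n:ℝ) ^ 2)⁻¹ * ∑ i, ∑ j, dist (f i) (G j) ^ p := by rw [sq, mul_inv]; ring
          _ ≤ γr / (n:ℝ) * ∑ i, ∑ j, A i j * dist (f i) (G j) ^ p := hγf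
          _ = (n:ℝ)⁻¹ * (γr * ∑ i, ∑ j, A i j * dist (f i) (G j) ^ p) := by
              rw [div_eq_mul_inv]; ring
      exact (mul_le_mul_iff_of_pos_left (inv_pos.mpr hnR)).mp h'
    have hI : (∑ j, dist (G j) W ^ p) + (K ^ p)⁻¹ * ∑ i, dist (f i) W ^ p ≤
        γr * ∑ i, ∑ j, A i j * dist (f i) (G j) ^ p := hF2.trans hF1
    -- F3 summed
    have hII : (∑ j, dist (G j) W ^ p) + (K ^ p)⁻¹ * ∑ i, ∑ j, A i j * dist (f i) (G j) ^ p ≤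
        ∑ i, dist (f i) W ^ p := by
      have hsum := Finset.sum_le_sum (fun i (_ : i ∈ Finset.univ) => hF3i i)
      rw [Finset.sum_add_distrib, ← Finset.mul_sum] at hsum
      have e1 : ∑ i, dist W (G i) ^ p = ∑ j, dist (G j) W ^ p :=
        Finset.sum_congr rfl fun i _ => by rw [dist_comm]
      have e2 : ∑ i, ∑ j, A i j * dist (G i) (f j) ^ p =
          ∑ i, ∑ j, A i j * dist (f i) (G j) ^ p := by
        rw [Finset.sum_comm]
        exact Finset.sum_congr rfl fun i _ => Finset.sum_congr rfl fun j _ => by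
          rw [hsymm.apply, dist_comm]
      have e3 : ∑ i, ∑ j, A i j * dist W (f j) ^ p = ∑ i, dist (f i) W ^ p := by
        rw [Finset.sum_comm]
        refine Finset.sum_congr rfl fun j _ => ?_
        rw [← Finset.sum_mul]
        have hcol : ∑ i, A i j = 1 := by
          rw [Finset.sum_congr rfl fun i _ => hsymm.apply j i]
          exact hA.2 j
        rw [hcol, one_mul, dist_comm]
      rw [e1, e2, e3] at hsum
      exact hsum
    have hEgR : ∑ j, dist (G j) W ^ p ≤
        (K ^ p * K ^ p * γr - 1) / (K ^ p * K ^ p * γr + K ^ p) * ∑ i, dist (f i) W ^ p :=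
      Aux.spectral_arith hk1 hγr1 hef0 heg0 hs0 hI hII hRden
    -- Minkowski step
    have h5mink : ((n:ℝ)⁻¹ * ∑ j, dist (G j) B ^ p) ^ p⁻¹ ≤
        ((n:ℝ)⁻¹ * ∑ j, dist (G j) W ^ p) ^ p⁻¹ + dist W B := by
      calc ((n:ℝ)⁻¹ * ∑ j, dist (G j) B ^ p) ^ p⁻¹
          ≤ ((n:ℝ)⁻¹ * ∑ j, (dist (G j) W + dist W B) ^ p) ^ p⁻¹ := by
            apply Real.rpow_le_rpow (mul_nonneg (inv_nonneg.mpr hnR.le) heb0) ?_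
              (inv_nonneg.mpr hp0.le)
            refine mul_le_mul_of_nonneg_left ?_ (inv_nonneg.mpr hnR.le)
            refine Finset.sum_le_sum fun j _ => ?_
            exact Real.rpow_le_rpow dist_nonneg (dist_triangle _ _ _) hp0.le
        _ ≤ _ := Aux.mink hn hp (fun j => dist (G j) W) (fun _ => dist_nonneg) dist_nonneg
    -- F4 reoriented
    have hF4' : dist W B ^ p + (K ^ p)⁻¹ * ((n:ℝ)⁻¹ * ∑ j, dist (G j) B ^ p) ≤
        (n:ℝ)⁻¹ * ∑ j, dist (G j) W ^ p := by
      have e1 : ∑ j, dist B (G j) ^ p = ∑ j, dist (G j) B ^ p :=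
        Finset.sum_congr rfl fun j _ => by rw [dist_comm]
      have e2 : ∑ j, dist W (G j) ^ p = ∑ j, dist (G j) W ^ p :=
        Finset.sum_congr rfl fun j _ => by rw [dist_comm]
      rw [e1, e2] at hF4
      exact hF4
    have hV : (n:ℝ)⁻¹ * ∑ j, dist (G j) B ^ p ≤
        β ^ p * ((n:ℝ)⁻¹ * ∑ j, dist (G j) W ^ p) :=
      Aux.beta_bound hp hK hβ hβeq (mul_nonneg (inv_nonneg.mpr hnR.le) heb0)
        (mul_nonneg (inv_nonneg.mpr hnR.le) heg0) dist_nonneg h5mink hF4'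
    -- finish
    have hfin : (n:ℝ)⁻¹ * ∑ j, dist (G j) B ^ p ≤
        β ^ p * ((K ^ p * K ^ p * γr - 1) / (K ^ p * K ^ p * γr + K ^ p) *
          ((n:ℝ)⁻¹ * ∑ i, dist (f i) W ^ p)) := by
      have h1 : (n:ℝ)⁻¹ * ∑ j, dist (G j) W ^ p ≤
          (K ^ p * K ^ p * γr - 1) / (K ^ p * K ^ p * γr + K ^ p) *
            ((n:ℝ)⁻¹ * ∑ i, dist (f i) W ^ p) := by
        linarith [mul_le_mul_of_nonneg_left hEgR (inv_nonneg.mpr hnR.le)]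
      exact hV.trans (mul_le_mul_of_nonneg_left h1 (Real.rpow_nonneg hβ0 p))
    calc ((n:ℝ)⁻¹ * ∑ i, dist (G i) B ^ p) ^ p⁻¹
        ≤ (β ^ p * ((K ^ p * K ^ p * γr - 1) / (K ^ p * K ^ p * γr + K ^ p) *
            ((n:ℝ)⁻¹ * ∑ i, dist (f i) W ^ p))) ^ p⁻¹ :=
          Real.rpow_le_rpow (mul_nonneg (inv_nonneg.mpr hnR.le) heb0) hfin
            (inv_nonneg.mpr hp0.le)
      _ = β * ((K ^ p * K ^ p * γr - 1) / (K ^ p * K ^ p * γr + K ^ p)) ^ p⁻¹ *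
            ((n:ℝ)⁻¹ * ∑ i, dist (f i) W ^ p) ^ p⁻¹ := by
          rw [Real.mul_rpow (Real.rpow_nonneg hβ0 p)
              (mul_nonneg hR0 (mul_nonneg (inv_nonneg.mpr hnR.le) hef0)),
            Real.mul_rpow hR0 (mul_nonneg (inv_nonneg.mpr hnR.le) hef0),
            Real.rpow_rpow_inv hβ0 hp0.ne']
          ring

end
end

section
/- Fix p, K ∈ [1,∞). Suppose (X,d_X) is a p-barycentric metric space with constant K via a barycenter map B. Then for every n ∈ ℕ, every symmetric stochastic matrix A = (a_{ij}) ∈ M_n(ℝ) and every f ∈ L_p^n(X): d_{L_p^n(X)}((A⊗I_X^n)(f), B((A⊗I_X^n)(f))) ≤ β_p(K)·d_{L_p^n(X)}((A⊗I_X^n)(f), B(f)). -/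
open scoped BigOperators ENNReal
open scoped Classical

noncomputable section

lemma exp_mix_aux {ι X : Type*} [Fintype ι] (w : ι → ℝ) (Z : ι → X)
    (hw : ∀ i, 0 ≤ w i) (h1 : ∑ i, w i = 1) (φ : X → ℝ) :
    (FinProb.mix w Z hw h1).exp φ = ∑ i, w i * φ (Z i) := by
  change (∑ i, Finsupp.single (Z i) (w i)).sum (fun x r => r * φ x) = _
  rw [← Finsupp.sum_finset_sum_index (fun x => zero_mul (φ x)) (fun x r s => add_mul r s (φ x))]
  exact Finset.sum_congr rfl fun i _ => Finsupp.sum_single_index (zero_mul _)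

lemma key_bary_lemma {X : Type*} [MetricSpace X] (p K : ℝ) (hp : 1 ≤ p) (hK : 1 ≤ K)
    {n : ℕ} (hn : 0 < n) (bary : FinProb X → X) (hP : IsPBarycentric p K bary)
    (g : Fin n → X) (x : X)
    (β : ℝ) (hβ : 1 ≤ β) (hβeq : β ^ p + K ^ p * (β - 1) ^ p = K ^ p) :
    dLpn p g (fun _ => baryFun bary hn g) ≤ β * dLpn p g (fun _ => x) := by
  have hp0 : (0:ℝ) < p := lt_of_lt_of_le one_pos hp
  have hn0 : (0:ℝ) < (n:ℝ) := by exact_mod_cast hn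
  set Bg := baryFun bary hn g with hBgdef
  set c := dist x Bg with hcdef
  set S₁ := (n:ℝ)⁻¹ * ∑ i, dist (g i) Bg ^ p with hS1def
  set S₂ := (n:ℝ)⁻¹ * ∑ i, dist (g i) x ^ p with hS2def
  have hS1nn : 0 ≤ S₁ := by
    apply mul_nonneg (by positivity)
    exact Finset.sum_nonneg fun i _ => Real.rpow_nonneg dist_nonneg p
  have hS2nn : 0 ≤ S₂ := by
    apply mul_nonneg (by positivity)
    exact Finset.sum_nonneg fun i _ => Real.rpow_nonneg dist_nonneg p
  -- the barycentric inequality with point x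
  have hE1 : c ^ p + K ^ (-p) * S₁ ≤ S₂ := by
    set μ := FinProb.mixN (fun _ : Fin n => 1) g (fun _ => zero_le_one)
      (by
        simp only [Finset.sum_const, Finset.card_univ, Fintype.card_fin, nsmul_eq_mul, mul_one]
        exact_mod_cast hn) with hμ
    have hBg : bary μ = Bg := rfl
    have hexp : ∀ φ : X → ℝ, μ.exp φ = (n:ℝ)⁻¹ * ∑ i, φ (g i) := by
      intro φ
      rw [hμ]
      unfold FinProb.mixN
      rw [exp_mix_aux]
      simp only [Finset.sum_const, Finset.card_univ, Fintype.card_fin, nsmul_eq_mul,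
        mul_one, one_div]
      rw [← Finset.mul_sum]
    have h := hP x μ
    rw [hBg, hexp, hexp] at h
    calc c ^ p + K ^ (-p) * S₁
        = dist x Bg ^ p + K ^ (-p) * ((n:ℝ)⁻¹ * ∑ i, dist Bg (g i) ^ p) := by
          rw [hS1def]
          congr 2
          rw [Finset.mul_sum, Finset.mul_sum]
          exact Finset.sum_congr rfl fun i _ => by rw [dist_comm]
      _ ≤ (n:ℝ)⁻¹ * ∑ i, dist x (g i) ^ p := h
      _ = S₂ := by
          rw [hS2def, Finset.mul_sum, Finset.mul_sum]
          exact Finset.sum_congr rfl fun i _ => by rw [dist_comm]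
  -- Minkowski: S₁^(1/p) ≤ S₂^(1/p) + c
  have hE2 : S₁ ^ p⁻¹ ≤ S₂ ^ p⁻¹ + c := by
    have h1 : (∑ i, dist (g i) Bg ^ p) ≤ ∑ i : Fin n, (dist (g i) x + c) ^ p := by
      refine Finset.sum_le_sum fun i _ => ?_
      exact Real.rpow_le_rpow dist_nonneg (dist_triangle _ _ _) hp0.le
    have h2 := Real.Lp_add_le_of_nonneg (f := fun i : Fin n => dist (g i) x)
      (g := fun _ : Fin n => c) (s := Finset.univ) hp
      (fun i _ => dist_nonneg) (fun i _ => dist_nonneg)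
    rw [one_div] at h2
    have h3 : (∑ i, dist (g i) Bg ^ p) ^ p⁻¹ ≤
        (∑ i, dist (g i) x ^ p) ^ p⁻¹ + (∑ _i : Fin n, c ^ p) ^ p⁻¹ := by
      refine le_trans ?_ h2
      exact Real.rpow_le_rpow (Finset.sum_nonneg fun i _ => Real.rpow_nonneg dist_nonneg p)
        h1 (by positivity)
    have hmul := mul_le_mul_of_nonneg_left h3 (le_of_lt (Real.rpow_pos_of_pos
      (inv_pos.mpr hn0) p⁻¹))
    calc S₁ ^ p⁻¹ = ((n:ℝ)⁻¹) ^ p⁻¹ * (∑ i, dist (g i) Bg ^ p) ^ p⁻¹ := by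
          rw [hS1def, Real.mul_rpow (by positivity)
            (Finset.sum_nonneg fun i _ => Real.rpow_nonneg dist_nonneg p)]
      _ ≤ ((n:ℝ)⁻¹) ^ p⁻¹ * ((∑ i, dist (g i) x ^ p) ^ p⁻¹ + (∑ _i : Fin n, c ^ p) ^ p⁻¹) :=
          hmul
      _ = S₂ ^ p⁻¹ + c := by
          rw [mul_add, hS2def, Real.mul_rpow (by positivity)
            (Finset.sum_nonneg fun i _ => Real.rpow_nonneg dist_nonneg p)]
          congr 1
          rw [← Real.mul_rpow (by positivity)
            (Finset.sum_nonneg fun i _ => Real.rpow_nonneg dist_nonneg p)]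
          simp only [Finset.sum_const, Finset.card_univ, Fintype.card_fin, nsmul_eq_mul]
          rw [← mul_assoc, inv_mul_cancel₀ (ne_of_gt hn0), one_mul]
          exact Real.rpow_rpow_inv dist_nonneg (ne_of_gt hp0)
  -- conclusion
  show S₁ ^ p⁻¹ ≤ β * S₂ ^ p⁻¹
  by_contra hcon
  push_neg at hcon
  set D₁ := S₁ ^ p⁻¹ with hD1
  set D₂ := S₂ ^ p⁻¹ with hD2
  have hD2nn : 0 ≤ D₂ := Real.rpow_nonneg hS2nn _
  have hD1p : D₁ ^ p = S₁ := Real.rpow_inv_rpow hS1nn (ne_of_gt hp0)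
  have hD2p : D₂ ^ p = S₂ := Real.rpow_inv_rpow hS2nn (ne_of_gt hp0)
  have hc1 : (β - 1) * D₂ < c := by
    have : D₁ ≤ D₂ + c := hE2
    nlinarith
  have hc1' : ((β - 1) * D₂) ^ p < c ^ p :=
    Real.rpow_lt_rpow (mul_nonneg (by linarith) hD2nn) hc1 hp0
  have hc2 : β * D₂ < D₁ := hcon
  have hc2' : (β * D₂) ^ p < D₁ ^ p :=
    Real.rpow_lt_rpow (mul_nonneg (by linarith) hD2nn) hc2 hp0
  have hmul1 : ((β - 1) * D₂) ^ p = (β - 1) ^ p * D₂ ^ p :=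
    Real.mul_rpow (by linarith) hD2nn
  have hmul2 : (β * D₂) ^ p = β ^ p * D₂ ^ p :=
    Real.mul_rpow (by linarith) hD2nn
  have hKpos : (0:ℝ) < K ^ p := Real.rpow_pos_of_pos (by linarith) p
  have hKneg : K ^ (-p) = (K ^ p)⁻¹ := by
    rw [Real.rpow_neg (by linarith : (0:ℝ) ≤ K)]
  have hsum : K ^ (-p) * β ^ p + (β - 1) ^ p = 1 := by
    rw [hKneg]
    field_simp
    linarith
  have hKinvpos : (0:ℝ) < K ^ (-p) := Real.rpow_pos_of_pos (by linarith) _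
  have h1 : K ^ (-p) * (β * D₂) ^ p < K ^ (-p) * D₁ ^ p :=
    mul_lt_mul_of_pos_left hc2' hKinvpos
  have hco : (β - 1) ^ p * D₂ ^ p + K ^ (-p) * (β ^ p * D₂ ^ p) = D₂ ^ p := by
    linear_combination D₂ ^ p * hsum
  rw [hmul1] at hc1'
  rw [hmul2] at h1
  have hfinal : D₂ ^ p < c ^ p + K ^ (-p) * D₁ ^ p := by linarith
  rw [hD1p, hD2p] at hfinal
  linarith

theorem statement14 (p K : ℝ) (hp : 1 ≤ p) (hK : 1 ≤ K) (n : ℕ) (hn : 0 < n)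
    (X : Type*) [MetricSpace X] (bary : FinProb X → X)
    (hBary : IsBarycenterMap bary) (hP : IsPBarycentric p K bary)
    (A : Matrix (Fin n) (Fin n) ℝ) (hA : IsStochastic A) (hsymm : A.IsSymm)
    (f : Fin n → X)
    (β : ℝ) (hβ : 1 ≤ β) (hβeq : β ^ p + K ^ p * (β - 1) ^ p = K ^ p) :
    dLpn p (matAct bary A hA f) (fun _ => baryFun bary hn (matAct bary A hA f)) ≤
      β * dLpn p (matAct bary A hA f) (fun _ => baryFun bary hn f) :=
  key_bary_lemma p K hp hK hn bary hP (matAct bary A hA f) (baryFun bary hn f) β hβ hβeq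

end
end
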